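/- Let G = (V,E) be a finite connected undirected graph with n = |V| ≥ 3 vertices and nonnegative edge costs c : E → ℝ≥0, and let d : V × V → ℝ≥0 be the shortest-path metric of G (d(u,v) is the minimum total cost of a walk in G from u to v). Then the minimum of Σ_{e} d_e x_e over all vectors x feasible for the subtour elimination LP on the complete graph over V with edge costs d equals the infimum of Σ_{e∈E} c_e y_e over all vectors y feasible for the 2ECSS LP on G. -/

import Mathlib

open scoped Classical

noncomputable section

variable {V : Type*} [Fintype V] [DecidableEq V]

/-- Cut value of `S`: the sum of `x` over edges of `G` with exactly one endpoint in `S`. -/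
def cutSum (G : SimpleGraph V) (x : Sym2 V → ℝ) (S : Set V) : ℝ :=
  ∑ e : Sym2 V, if e ∈ G.edgeSet ∧ ∃ u v, e = s(u, v) ∧ u ∈ S ∧ v ∉ S then x e else 0

/-- `x` is feasible for the 2ECSS LP on `G`: nonnegative on edges, and every
nonempty proper cut has value at least `2`. -/
def Feas2ECSS (G : SimpleGraph V) (x : Sym2 V → ℝ) : Prop :=
  (∀ e ∈ G.edgeSet, 0 ≤ x e) ∧
    ∀ S : Set V, S.Nonempty → S ≠ Set.univ → 2 ≤ cutSum G x S

/-- Cost `∑_{e ∈ E} c_e x_e` of a vector `x` with respect to edge costs `c`. -/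
def lpCost (G : SimpleGraph V) (c x : Sym2 V → ℝ) : ℝ :=
  ∑ e : Sym2 V, if e ∈ G.edgeSet then c e * x e else 0

/-- The support of `x`: edges of `G` where `x` is nonzero. -/
def lpSupport (G : SimpleGraph V) (x : Sym2 V → ℝ) : Finset (Sym2 V) :=
  Finset.univ.filter fun e => e ∈ G.edgeSet ∧ x e ≠ 0
/-- The sum of `x` over edges of `G` incident to the vertex `v`. -/
def vertexSum (G : SimpleGraph V) (x : Sym2 V → ℝ) (v : V) : ℝ :=
  ∑ e : Sym2 V, if e ∈ G.edgeSet ∧ v ∈ e then x e else 0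

/-- `x` is feasible for the subtour elimination LP on `G`. -/
def FeasSubtour (G : SimpleGraph V) (x : Sym2 V → ℝ) : Prop :=
  (∀ e ∈ G.edgeSet, 0 ≤ x e ∧ x e ≤ 1) ∧
    (∀ v : V, vertexSum G x v = 2) ∧
    ∀ S : Set V, S.Nonempty → S ≠ Set.univ → 2 ≤ cutSum G x S

/-- The shortest-path distance between the two endpoints of the pair `e`:
the infimum of the total cost of a walk in `G` between them. -/
def spDist (G : SimpleGraph V) (c : Sym2 V → ℝ) (e : Sym2 V) : ℝ :=
  sInf {t | ∃ u v, e = s(u, v) ∧ ∃ p : G.Walk u v, t = (p.edges.map c).sum}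


namespace Aux
set_option linter.unusedSectionVars false
set_option linter.unnecessarySeqFocus false



variable {G : SimpleGraph V} {c : Sym2 V → ℝ}

def wcost (c : Sym2 V → ℝ) {G : SimpleGraph V} {u v : V} (p : G.Walk u v) : ℝ :=
  (p.edges.map c).sum

lemma wcost_nonneg (hc : ∀ e ∈ G.edgeSet, 0 ≤ c e) {u v : V} (p : G.Walk u v) :
    0 ≤ wcost c p := by
  apply List.sum_nonneg
  intro x hx
  simp only [List.mem_map] at hx
  obtain ⟨e, he, rfl⟩ := hx
  exact hc e (p.edges_subset_edgeSet he)

lemma wcost_reverse {u v : V} (p : G.Walk u v) : wcost c p.reverse = wcost c p := by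
  simp [wcost, SimpleGraph.Walk.edges_reverse, List.map_reverse, List.sum_reverse]

lemma wcost_append {u v w : V} (p : G.Walk u v) (q : G.Walk v w) :
    wcost c (p.append q) = wcost c p + wcost c q := by
  simp [wcost, SimpleGraph.Walk.edges_append]

lemma toFinset_sum_le_list (c : Sym2 V → ℝ) (l : List (Sym2 V)) (h : ∀ x ∈ l, 0 ≤ c x) :
    l.toFinset.sum c ≤ (l.map c).sum := by
  induction l with
  | nil => simp
  | cons a l ih =>
    simp only [List.toFinset_cons, List.map_cons, List.sum_cons]
    by_cases ha : a ∈ l.toFinset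
    · rw [Finset.insert_eq_self.2 ha]
      have := ih (fun x hx => h x (List.mem_cons_of_mem _ hx))
      have h0 : 0 ≤ c a := h a (List.mem_cons_self)
      linarith
    · rw [Finset.sum_insert ha]
      have := ih (fun x hx => h x (List.mem_cons_of_mem _ hx))
      linarith

lemma wcost_le_of_subset (hc : ∀ e ∈ G.edgeSet, 0 ≤ c e) {u v a b : V}
    (p : G.Walk u v) (q : G.Walk a b) (hnd : p.edges.Nodup) (hsub : p.edges ⊆ q.edges) :
    wcost c p ≤ wcost c q := by
  unfold wcost
  rw [← List.sum_toFinset c hnd]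
  calc p.edges.toFinset.sum c ≤ q.edges.toFinset.sum c := by
        apply Finset.sum_le_sum_of_subset_of_nonneg
        · intro x hx
          simp only [List.mem_toFinset] at *
          exact hsub hx
        · intro e he _
          simp only [List.mem_toFinset] at he
          exact hc e (q.edges_subset_edgeSet he)
    _ ≤ (q.edges.map c).sum := toFinset_sum_le_list c _
        (fun x hx => hc x (q.edges_subset_edgeSet hx))

lemma spDist_le (hc : ∀ e ∈ G.edgeSet, 0 ≤ c e) {u v : V} (p : G.Walk u v) :
    spDist G c s(u, v) ≤ wcost c p := by
  apply csInf_le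
  · refine ⟨0, ?_⟩
    rintro t ⟨a, b, hab, q, rfl⟩
    exact wcost_nonneg hc q
  · exact ⟨u, v, rfl, p, rfl⟩

lemma spDist_nonneg (hc : ∀ e ∈ G.edgeSet, 0 ≤ c e) (e : Sym2 V) : 0 ≤ spDist G c e := by
  apply Real.sInf_nonneg
  rintro t ⟨a, b, hab, q, rfl⟩
  exact wcost_nonneg hc q

lemma exists_spWalk (hG : G.Connected) (hc : ∀ e ∈ G.edgeSet, 0 ≤ c e) (u v : V) :
    ∃ p : G.Walk u v, wcost c p = spDist G c s(u, v) := by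
  have hne : Nonempty (G.Path u v) := ⟨⟨((hG u v).some).bypass, SimpleGraph.Walk.bypass_isPath _⟩⟩
  obtain ⟨q₀, -, hq₀⟩ := Finset.exists_min_image (Finset.univ : Finset (G.Path u v))
    (fun q => wcost c q.1) ⟨hne.some, Finset.mem_univ _⟩
  refine ⟨q₀.1, le_antisymm ?_ (spDist_le hc _)⟩
  have hmem : wcost c q₀.1 ∈ {t | ∃ a b, s(u,v) = s(a, b) ∧ ∃ p : G.Walk a b, t = (p.edges.map c).sum} :=
    ⟨u, v, rfl, q₀.1, rfl⟩
  apply le_csInf (Set.nonempty_of_mem hmem)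
  rintro t ⟨a, b, hab, q, rfl⟩
  have key : ∀ (r : G.Walk u v), wcost c q₀.1 ≤ wcost c r := by
    intro r
    calc wcost c q₀.1 ≤ wcost c (⟨r.bypass, SimpleGraph.Walk.bypass_isPath r⟩ : G.Path u v).1 := hq₀ _ (Finset.mem_univ _)
      _ ≤ wcost c r := by
          apply wcost_le_of_subset hc
          · exact (SimpleGraph.Walk.bypass_isPath r).edges_nodup
          · exact SimpleGraph.Walk.edges_bypass_subset r
  rw [Sym2.eq_iff] at hab
  rcases hab with ⟨rfl, rfl⟩ | ⟨rfl, rfl⟩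
  · exact key q
  · calc wcost c q₀.1 ≤ wcost c q.reverse := key q.reverse
      _ = wcost c q := wcost_reverse q

lemma spDist_triangle (hG : G.Connected) (hc : ∀ e ∈ G.edgeSet, 0 ≤ c e) (u v w : V) :
    spDist G c s(u, w) ≤ spDist G c s(u, v) + spDist G c s(v, w) := by
  obtain ⟨p, hp⟩ := exists_spWalk hG hc u v
  obtain ⟨q, hq⟩ := exists_spWalk hG hc v w
  calc spDist G c s(u, w) ≤ wcost c (p.append q) := spDist_le hc _
    _ = wcost c p + wcost c q := wcost_append p q
    _ = _ := by rw [hp, hq]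

lemma spDist_le_c (hc : ∀ e ∈ G.edgeSet, 0 ≤ c e) {u v : V} (h : G.Adj u v) :
    spDist G c s(u, v) ≤ c s(u, v) := by
  have := spDist_le hc (SimpleGraph.Walk.cons h SimpleGraph.Walk.nil)
  simpa [wcost] using this

lemma spDist_diag (hc : ∀ e ∈ G.edgeSet, 0 ≤ c e) (u : V) : spDist G c s(u, u) = 0 := by
  refine le_antisymm ?_ (spDist_nonneg hc _)
  have := spDist_le hc (SimpleGraph.Walk.nil (u := u) (G := G))
  simpa [wcost] using this

lemma spDist_isDiag_eq_zero (hc : ∀ e ∈ G.edgeSet, 0 ≤ c e) {e : Sym2 V} (h : e.IsDiag) :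
    spDist G c e = 0 := by
  induction e using Sym2.ind with
  | _ u v =>
    rw [Sym2.mk_isDiag_iff] at h
    subst h
    exact spDist_diag hc u




/-- Crossing predicate for a pair. -/
def crossP (S : Set V) (e : Sym2 V) : Prop := ∃ u v, e = s(u, v) ∧ u ∈ S ∧ v ∉ S

lemma crossP_mk {S : Set V} {u v : V} :
    crossP S s(u, v) ↔ (u ∈ S ∧ v ∉ S) ∨ (v ∈ S ∧ u ∉ S) := by
  constructor
  · rintro ⟨a, b, hab, ha, hb⟩
    rw [Sym2.eq_iff] at hab
    rcases hab with ⟨rfl, rfl⟩ | ⟨rfl, rfl⟩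
    · exact Or.inl ⟨ha, hb⟩
    · exact Or.inr ⟨ha, hb⟩
  · rintro (⟨h1, h2⟩ | ⟨h1, h2⟩)
    · exact ⟨u, v, rfl, h1, h2⟩
    · exact ⟨v, u, Sym2.eq_swap, h1, h2⟩

lemma crossP_diag {S : Set V} {u : V} : ¬ crossP S s(u, u) := by
  rw [crossP_mk]; tauto

/-- Cut value of a finset in a multigraph given by multiplicities. -/
def cutN (m : Sym2 V → ℕ) (X : Finset V) : ℕ :=
  ∑ e : Sym2 V, if crossP (↑X) e then m e else 0

/-- Sum of multiplicities of edges from `s` to vertices of `X`. -/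
def joins (m : Sym2 V → ℕ) (s : V) (X : Finset V) : ℕ := ∑ v ∈ X, m s(s, v)

def costD (Dd : Sym2 V → ℝ) (m : Sym2 V → ℕ) : ℝ := ∑ e : Sym2 V, (m e : ℝ) * Dd e

lemma cutN_compl (m : Sym2 V → ℕ) (X : Finset V) : cutN m Xᶜ = cutN m X := by
  unfold cutN
  apply Finset.sum_congr rfl
  intro e _
  congr 1
  induction e using Sym2.ind with
  | _ u v =>
    simp only [crossP_mk, Finset.coe_compl, Set.mem_compl_iff, Finset.mem_coe, eq_iff_iff]
    tauto

lemma cutN_submod (m : Sym2 V → ℕ) (X Y : Finset V) :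
    cutN m (X ∩ Y) + cutN m (X ∪ Y) ≤ cutN m X + cutN m Y := by
  unfold cutN
  rw [← Finset.sum_add_distrib, ← Finset.sum_add_distrib]
  apply Finset.sum_le_sum
  intro e _
  induction e using Sym2.ind with
  | _ u v =>
    by_cases hux : u ∈ X <;> by_cases huy : u ∈ Y <;>
      by_cases hvx : v ∈ X <;> by_cases hvy : v ∈ Y <;>
      simp [crossP_mk, hux, huy, hvx, hvy]

lemma cutN_union_compl_eq_univ (m : Sym2 V → ℕ) : cutN m Finset.univ = 0 := by
  unfold cutN
  apply Finset.sum_eq_zero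
  intro e _
  rw [if_neg]
  rintro ⟨u, v, -, -, hv⟩
  simp at hv

/-- `joins` as an edge-indexed sum. -/
lemma joins_eq_edge_sum (m : Sym2 V → ℕ) (s : V) (X : Finset V) (hs : s ∉ X) :
    joins m s X = ∑ e : Sym2 V, if e ∈ X.image (fun v => s(s, v)) then m e else 0 := by
  rw [Finset.sum_ite_mem, Finset.univ_inter, Finset.sum_image]
  · rfl
  · intro a ha b hb hab
    rw [Sym2.eq_iff] at hab
    rcases hab with ⟨-, h⟩ | ⟨h1, h2⟩
    · exact h
    · subst h2; exact absurd ha hs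

lemma mem_image_joins {s : V} {X : Finset V} (hs : s ∉ X) {u v : V} :
    s(u, v) ∈ X.image (fun w => s(s, w)) ↔ (u = s ∧ v ∈ X) ∨ (v = s ∧ u ∈ X) := by
  simp only [Finset.mem_image]
  constructor
  · rintro ⟨w, hw, h⟩
    rw [Sym2.eq_iff] at h
    rcases h with ⟨h1, h2⟩ | ⟨h1, h2⟩
    · subst h1; subst h2; exact Or.inl ⟨rfl, hw⟩
    · subst h1; subst h2; exact Or.inr ⟨rfl, hw⟩
  · rintro (⟨rfl, hv⟩ | ⟨rfl, hu⟩)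
    · exact ⟨v, hv, (Sym2.eq_iff.2 (Or.inl ⟨rfl, rfl⟩))⟩
    · exact ⟨u, hu, (Sym2.eq_iff.2 (Or.inr ⟨rfl, rfl⟩))⟩

/-- Main expansion identity: adding `s` to a cut. -/
lemma cutN_insert (m : Sym2 V → ℕ) (s : V) (X : Finset V) (hs : s ∉ X) :
    cutN m (insert s X) + 2 * joins m s X = cutN m X + cutN m {s} := by
  rw [joins_eq_edge_sum m s X hs]
  unfold cutN
  rw [Finset.mul_sum, ← Finset.sum_add_distrib, ← Finset.sum_add_distrib]
  apply Finset.sum_congr rfl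
  intro e _
  induction e using Sym2.ind with
  | _ u v =>
    have himg := mem_image_joins (u := u) (v := v) hs
    by_cases hus : u = s <;> by_cases hvs : v = s <;>
      by_cases hux : u ∈ X <;> by_cases hvx : v ∈ X
    all_goals (
      first
      | (exfalso; (first | exact hs (hus ▸ hux) | exact hs (hvs ▸ hvx)))
      | (simp only [crossP_mk, Finset.coe_insert, Set.mem_insert_iff, Finset.mem_coe,
          Finset.coe_singleton, Set.mem_singleton_iff, himg, hus, hvs, hux, hvx]
         <;> subst_vars <;> simp_all <;> omega))

lemma cutN_singleton_eq_joins (m : Sym2 V → ℕ) (s : V) :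
    cutN m {s} = joins m s (Finset.univ.erase s) := by
  have h := cutN_insert m s (Finset.univ.erase s) (by simp)
  rw [Finset.insert_erase (Finset.mem_univ s)] at h
  rw [cutN_union_compl_eq_univ] at h
  have h2 : cutN m (Finset.univ.erase s) = cutN m {s} := by
    rw [← Finset.compl_singleton, cutN_compl]
  omega

lemma joins_union_inter (m : Sym2 V → ℕ) (s : V) (X Y : Finset V) :
    joins m s (X ∪ Y) + joins m s (X ∩ Y) = joins m s X + joins m s Y :=
  Finset.sum_union_inter

lemma joins_single_le (m : Sym2 V → ℕ) (s : V) {a : V} {X : Finset V} (ha : a ∈ X) :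
    m s(s, a) ≤ joins m s X :=
  Finset.single_le_sum (f := fun v => m s(s, v)) (fun _ _ => Nat.zero_le _) ha

lemma joins_sdiff (m : Sym2 V → ℕ) (s : V) {X Y : Finset V} (h : X ⊆ Y) :
    joins m s (Y \ X) + joins m s X = joins m s Y :=
  Finset.sum_sdiff h

lemma insideP_mk {S : Set V} {u v : V} :
    (∃ a b, s(u, v) = s(a, b) ∧ a ∈ S ∧ b ∈ S ∧ a ≠ b) ↔ (u ∈ S ∧ v ∈ S ∧ u ≠ v) := by
  constructor
  · rintro ⟨a, b, hab, ha, hb, hne⟩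
    rw [Sym2.eq_iff] at hab
    rcases hab with ⟨rfl, rfl⟩ | ⟨rfl, rfl⟩
    · exact ⟨ha, hb, hne⟩
    · exact ⟨hb, ha, fun h => hne h.symm⟩
  · rintro ⟨h1, h2, h3⟩
    exact ⟨u, v, rfl, h1, h2, h3⟩

/-- Parity: if all degrees are even then all cuts are even. -/
def insideN (m : Sym2 V → ℕ) (X : Finset V) : ℕ :=
  ∑ e : Sym2 V, if (∃ u v, e = s(u, v) ∧ u ∈ (↑X : Set V) ∧ v ∈ (↑X : Set V) ∧ u ≠ v)
    then m e else 0

lemma sum_deg_eq (m : Sym2 V → ℕ) (X : Finset V) :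
    ∑ v ∈ X, cutN m {v} = cutN m X + 2 * insideN m X := by
  unfold cutN insideN
  rw [Finset.sum_comm]
  rw [Finset.mul_sum, ← Finset.sum_add_distrib]
  apply Finset.sum_congr rfl
  intro e _
  induction e using Sym2.ind with
  | _ u v =>
    by_cases huv : u = v
    · subst huv
      have : ∀ w : V, ¬ crossP (↑({w} : Finset V)) s(u, u) := fun w => crossP_diag
      simp only [this, if_false, Finset.sum_const_zero]
      have h2 : ¬ crossP (↑X) s(u, u) := crossP_diag
      rw [if_neg h2, if_neg (fun h => by
        obtain ⟨-, -, hne⟩ := insideP_mk.1 h; exact hne rfl)]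
      simp
    · have hcross : ∀ w : V, crossP (↑({w} : Finset V)) s(u, v) ↔ (w = u ∨ w = v) := by
        intro w
        rw [crossP_mk]
        simp only [Finset.coe_singleton, Set.mem_singleton_iff]
        constructor
        · rintro (⟨h1, -⟩ | ⟨h1, -⟩)
          · exact Or.inl h1.symm
          · exact Or.inr h1.symm
        · rintro (rfl | rfl)
          · exact Or.inl ⟨rfl, fun h => huv h.symm⟩
          · exact Or.inr ⟨rfl, fun h => huv h⟩
      have hsplit : ∀ w ∈ X, (if crossP (↑({w} : Finset V)) s(u, v) then m s(u,v) else 0)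
          = (if w = u then m s(u,v) else 0) + (if w = v then m s(u,v) else 0) := by
        intro w _
        rw [if_congr (hcross w) rfl rfl]
        by_cases h1 : w = u <;> by_cases h2 : w = v <;> simp_all
      rw [Finset.sum_congr rfl hsplit, Finset.sum_add_distrib,
        Finset.sum_ite_eq' X u (fun _ => m s(u,v)), Finset.sum_ite_eq' X v (fun _ => m s(u,v))]
      have h3 : (∃ a b, s(u, v) = s(a, b) ∧ a ∈ (↑X : Set V) ∧ b ∈ (↑X : Set V) ∧ a ≠ b)
          ↔ (u ∈ X ∧ v ∈ X ∧ u ≠ v) := by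
        rw [insideP_mk]; simp
      rw [if_congr h3 rfl rfl, crossP_mk]
      by_cases h1 : u ∈ X <;> by_cases h2 : v ∈ X <;>
        simp [h1, h2, huv] <;> omega
  
lemma cutN_even (m : Sym2 V → ℕ) (hdeg : ∀ v : V, Even (cutN m {v})) (X : Finset V) :
    Even (cutN m X) := by
  have h := sum_deg_eq m X
  have h2 : Even (∑ v ∈ X, cutN m {v}) := Finset.even_sum _ (fun v _ => hdeg v)
  rcases h2 with ⟨k, hk⟩
  refine ⟨k - insideN m X, ?_⟩
  omega



variable {V : Type*} [Fintype V] [DecidableEq V]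

def ind (f : Sym2 V) : Sym2 V → ℕ := fun e => if e = f then 1 else 0

lemma cutN_congr {m1 m2 : Sym2 V → ℕ} (h : ∀ e, m1 e = m2 e) (X : Finset V) :
    cutN m1 X = cutN m2 X := by
  unfold cutN; exact Finset.sum_congr rfl (fun e _ => by rw [h e])

lemma cutN_add (m1 m2 : Sym2 V → ℕ) (X : Finset V) :
    cutN (fun e => m1 e + m2 e) X = cutN m1 X + cutN m2 X := by
  unfold cutN
  rw [← Finset.sum_add_distrib]
  exact Finset.sum_congr rfl (fun e _ => by by_cases h : crossP (↑X) e <;> simp [h])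

lemma cutN_ind (f : Sym2 V) (X : Finset V) :
    cutN (ind f) X = if crossP (↑X) f then 1 else 0 := by
  unfold cutN ind
  rw [Finset.sum_eq_single_of_mem f (Finset.mem_univ f)]
  · by_cases h : crossP (↑X) f <;> simp [h]
  · intro e _ hne
    by_cases h : crossP (↑X) e <;> simp [h, hne]

lemma costD_add (Dd : Sym2 V → ℝ) (m1 m2 : Sym2 V → ℕ) :
    costD Dd (fun e => m1 e + m2 e) = costD Dd m1 + costD Dd m2 := by
  unfold costD
  rw [← Finset.sum_add_distrib]
  apply Finset.sum_congr rfl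
  intro e _
  push_cast
  ring

lemma costD_congr (Dd : Sym2 V → ℝ) {m1 m2 : Sym2 V → ℕ} (h : ∀ e, m1 e = m2 e) :
    costD Dd m1 = costD Dd m2 := by
  unfold costD; exact Finset.sum_congr rfl (fun e _ => by rw [h e])

lemma costD_ind (Dd : Sym2 V → ℝ) (f : Sym2 V) : costD Dd (ind f) = Dd f := by
  unfold costD ind
  rw [Finset.sum_eq_single_of_mem f (Finset.mem_univ f)]
  · simp
  · intro e _ hne
    simp [hne]

lemma sym2_ss_eq {s a b : V} (ha : a ≠ s) : (s(s, a) = s(s, b)) ↔ a = b := by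
  rw [Sym2.eq_iff]
  constructor
  · rintro (⟨-, h⟩ | ⟨h1, h2⟩)
    · exact h
    · exact absurd h2 ha
  · rintro rfl; exact Or.inl ⟨rfl, rfl⟩

section Split

variable (m : Sym2 V → ℕ) (s a b : V)

def splitM : Sym2 V → ℕ :=
  fun e => (m e - ind s(s, a) e - ind s(s, b) e) + ind s(a, b) e

variable {m s a b}

def Slots (m : Sym2 V → ℕ) (s a b : V) : Prop :=
  if a = b then 2 ≤ m s(s, a) else 1 ≤ m s(s, a) ∧ 1 ≤ m s(s, b)

lemma split_decomp (ha : a ≠ s) (hb : b ≠ s) (hslot : Slots m s a b) (e : Sym2 V) :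
    m e = ((m e - ind s(s, a) e - ind s(s, b) e) + ind s(s, a) e) + ind s(s, b) e := by
  unfold Slots at hslot
  unfold ind
  by_cases hab : a = b
  · subst hab
    rw [if_pos rfl] at hslot
    by_cases h : e = s(s, a)
    · subst h; simp; omega
    · simp [h]
  · rw [if_neg hab] at hslot
    have hne : s(s, a) ≠ s(s, b) := fun h => hab ((sym2_ss_eq ha).1 h)
    by_cases h1 : e = s(s, a)
    · subst h1; simp [hne]; omega
    · by_cases h2 : e = s(s, b)
      · subst h2; simp [Ne.symm hne]; omega
      · simp [h1, h2]

lemma cutN_splitM (ha : a ≠ s) (hb : b ≠ s) (hslot : Slots m s a b) (X : Finset V) :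
    cutN (splitM m s a b) X
      + ((if crossP (↑X) s(s, a) then 1 else 0) + (if crossP (↑X) s(s, b) then 1 else 0))
    = cutN m X + (if crossP (↑X) s(a, b) then 1 else 0) := by
  have h1 : cutN m X = cutN (fun e => ((m e - ind s(s,a) e - ind s(s,b) e) + ind s(s,a) e)
      + ind s(s,b) e) X := cutN_congr (split_decomp ha hb hslot) X
  rw [h1, cutN_add _ (ind s(s,b)), cutN_add _ (ind s(s,a)), cutN_ind, cutN_ind]
  unfold splitM
  rw [cutN_add _ (ind s(a,b)), cutN_ind]
  ring

lemma costD_splitM (ha : a ≠ s) (hb : b ≠ s) (hslot : Slots m s a b) (Dd : Sym2 V → ℝ) :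
    costD Dd (splitM m s a b) + Dd s(s, a) + Dd s(s, b) = costD Dd m + Dd s(a, b) := by
  have h1 : costD Dd m = costD Dd (fun e => ((m e - ind s(s,a) e - ind s(s,b) e) + ind s(s,a) e)
      + ind s(s,b) e) := costD_congr Dd (split_decomp ha hb hslot)
  rw [h1, costD_add _ _ (ind s(s,b)), costD_add _ _ (ind s(s,a)), costD_ind, costD_ind]
  unfold splitM
  rw [costD_add _ _ (ind s(a,b)), costD_ind]
  ring

/-- effect of a split on a cut not containing `s`. -/
lemma cutN_splitM_not_mem (ha : a ≠ s) (hb : b ≠ s) (hslot : Slots m s a b)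
    {X : Finset V} (hs : s ∉ X) :
    cutN (splitM m s a b) X + 2 * (if a ∈ X ∧ b ∈ X then 1 else 0) = cutN m X := by
  have h := cutN_splitM ha hb hslot X
  have c1 : (if crossP (↑X) s(s, a) then (1:ℕ) else 0) = if a ∈ X then 1 else 0 := by
    rw [crossP_mk]
    by_cases h2 : a ∈ X <;> simp [hs, h2]
  have c2 : (if crossP (↑X) s(s, b) then (1:ℕ) else 0) = if b ∈ X then 1 else 0 := by
    rw [crossP_mk]
    by_cases h2 : b ∈ X <;> simp [hs, h2]
  have c3 : (if crossP (↑X) s(a, b) then (1:ℕ) else 0)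
      = if (a ∈ X ∧ b ∉ X) ∨ (b ∈ X ∧ a ∉ X) then 1 else 0 := by
    rw [crossP_mk]; simp
  rw [c1, c2, c3] at h
  by_cases h2 : a ∈ X <;> by_cases h3 : b ∈ X <;> simp [h2, h3] at h ⊢ <;> omega

end Split


variable {V : Type*} [Fintype V] [DecidableEq V]

/-- `er s` : all vertices except `s`. -/
def er (s : V) : Finset V := Finset.univ.erase s

lemma joins_pos_witness (m : Sym2 V → ℕ) (s : V) {X : Finset V} (h : 0 < joins m s X) :
    ∃ t ∈ X, 1 ≤ m s(s, t) := by
  by_contra hc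
  push_neg at hc
  have : joins m s X = 0 := Finset.sum_eq_zero (fun v hv => by
    have := hc v hv; omega)
  omega

lemma exists_maximal_dang (m : Sym2 V → ℕ) (lam : ℕ) (s : V)
    {X0 : Finset V} (h0 : X0.Nonempty ∧ X0 ⊆ er s ∧ X0 ≠ er s ∧ cutN m X0 < lam + 2) :
    ∃ X : Finset V, X0 ⊆ X ∧ (X.Nonempty ∧ X ⊆ er s ∧ X ≠ er s ∧ cutN m X < lam + 2) ∧
      ∀ Z : Finset V, (Z.Nonempty ∧ Z ⊆ er s ∧ Z ≠ er s ∧ cutN m Z < lam + 2) →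
        X ⊆ Z → Z = X := by
  classical
  set P : Finset V → Prop :=
    fun Y => (Y.Nonempty ∧ Y ⊆ er s ∧ Y ≠ er s ∧ cutN m Y < lam + 2) ∧ X0 ⊆ Y with hP
  obtain ⟨X, hXmem, hXmax⟩ := Finset.exists_max_image
    (Finset.univ.filter P) (fun Y => Y.card)
    ⟨X0, by simp only [Finset.mem_filter, Finset.mem_univ, true_and, hP]; exact ⟨h0, subset_rfl⟩⟩
  simp only [Finset.mem_filter, Finset.mem_univ, true_and, hP] at hXmem
  refine ⟨X, hXmem.2, hXmem.1, ?_⟩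
  intro Z hZ hXZ
  have hZmem : Z ∈ Finset.univ.filter P := by
    simp only [Finset.mem_filter, Finset.mem_univ, true_and, hP]
    exact ⟨hZ, hXmem.2.trans hXZ⟩
  exact (Finset.eq_of_subset_of_card_le hXZ (hXmax Z hZmem)).symm

lemma er_eq_compl (s : V) : er s = ({s} : Finset V)ᶜ := by
  rw [Finset.compl_singleton]; rfl

/-- Lovász's splitting-off theorem, Eulerian case. -/
lemma exists_admissible (m : Sym2 V → ℕ) (s : V) (lam : ℕ)
    (hlam : Even lam) (hlam2 : 2 ≤ lam)
    (hdeg : ∀ v : V, Even (cutN m {v}))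
    (hconn : ∀ X : Finset V, X.Nonempty → X ⊆ er s → X ≠ er s →
      lam ≤ cutN m X ∧ lam ≤ cutN m (insert s X))
    (hD : lam < cutN m {s}) :
    ∃ a b : V, a ≠ s ∧ b ≠ s ∧ Slots m s a b ∧
      ∀ X : Finset V, X.Nonempty → X ⊆ er s → X ≠ er s → a ∈ X → b ∈ X →
        lam + 2 ≤ cutN m X := by
  classical
  by_contra hcon
  push_neg at hcon
  -- abbreviations
  set D := cutN m {s} with hDdef
  obtain ⟨dhalf, hDhalf⟩ := hdeg s
  obtain ⟨lhalf, hlhalf⟩ := hlam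
  have hD2 : lam + 2 ≤ D := by omega
  have hje : joins m s (er s) = D := (cutN_singleton_eq_joins m s).symm
  -- Step 1 : for any dangerous set, at most half the ends lie inside
  have step1 : ∀ X : Finset V, X.Nonempty → X ⊆ er s → X ≠ er s → cutN m X < lam + 2 →
      2 * joins m s X ≤ D := by
    intro X h1 h2 h3 h4
    have hs : s ∉ X := fun h => by
      have := h2 h; rw [er, Finset.mem_erase] at this; exact this.1 rfl
    have hins := cutN_insert m s X hs
    have hc := hconn X h1 h2 h3
    have hev := cutN_even m hdeg X
    obtain ⟨xk, hxk⟩ := hev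
    -- cutN X = lam (evenness + bounds)
    omega
  -- there is an end
  have hjpos : 0 < joins m s (er s) := by omega
  obtain ⟨t, ht_er, ht⟩ := joins_pos_witness m s hjpos
  have hts : t ≠ s := (Finset.mem_erase.1 ht_er).1
  -- get a dangerous set containing t
  have hX0 : ∃ X0 : Finset V, X0.Nonempty ∧ X0 ⊆ er s ∧ X0 ≠ er s ∧ cutN m X0 < lam + 2
      ∧ t ∈ X0 := by
    by_cases h2 : 2 ≤ m s(s, t)
    · obtain ⟨X, hX1, hX2, hX3, -, hX5, hX6⟩ := hcon t t hts hts (by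
        unfold Slots; rw [if_pos rfl]; exact h2)
      exact ⟨X, hX1, hX2, hX3, by omega, hX5⟩
    · have h1t : m s(s, t) = 1 := by omega
      have hrest : 0 < joins m s (er s \ {t}) := by
        have := joins_sdiff m s (Finset.singleton_subset_iff.2 ht_er)
        have hj1 : joins m s {t} = m s(s, t) := Finset.sum_singleton _ _
        omega
      obtain ⟨u, hu_mem, hu⟩ := joins_pos_witness m s hrest
      have hut : u ≠ t := by
        rcases Finset.mem_sdiff.1 hu_mem with ⟨-, h⟩
        simpa using h
      have hus : u ≠ s := (Finset.mem_erase.1 (Finset.mem_sdiff.1 hu_mem).1).1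
      obtain ⟨X, hX1, hX2, hX3, hX4, hX5, hX6⟩ := hcon t u hts hus (by
        unfold Slots; rw [if_neg (Ne.symm hut)]; exact ⟨ht, hu⟩)
      exact ⟨X, hX1, hX2, hX3, by omega, hX4⟩
  obtain ⟨X0, hX01, hX02, hX03, hX04, hX0t⟩ := hX0
  -- maximal dangerous X1 containing t
  obtain ⟨X1, hX01sub, ⟨hX11, hX12, hX13, hX14⟩, hX1max⟩ :=
    exists_maximal_dang m lam s ⟨hX01, hX02, hX03, hX04⟩
  have htX1 : t ∈ X1 := hX01sub hX0t
  -- an end outside X1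
  have h2j1 : 2 * joins m s X1 ≤ D := step1 X1 hX11 hX12 hX13 hX14
  have hsd : joins m s (er s \ X1) + joins m s X1 = D := by
    rw [joins_sdiff m s hX12]; exact hje
  have : 0 < joins m s (er s \ X1) := by omega
  obtain ⟨u, hu_mem, hu⟩ := joins_pos_witness m s this
  have huX1 : u ∉ X1 := (Finset.mem_sdiff.1 hu_mem).2
  have hus : u ≠ s := (Finset.mem_erase.1 (Finset.mem_sdiff.1 hu_mem).1).1
  have hut : u ≠ t := fun h => huX1 (h ▸ htX1)
  -- dangerous set containing t and u, maximalized
  obtain ⟨Y, hY1, hY2, hY3, hYt, hYu, hY4⟩ := hcon t u hts hus (by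
    unfold Slots; rw [if_neg (Ne.symm hut)]; exact ⟨ht, hu⟩)
  obtain ⟨X2, hYsub, ⟨hX21, hX22, hX23, hX24⟩, hX2max⟩ :=
    exists_maximal_dang m lam s ⟨hY1, hY2, hY3, by omega⟩
  have htX2 : t ∈ X2 := hYsub hYt
  have huX2 : u ∈ X2 := hYsub hYu
  have h2j2 : 2 * joins m s X2 ≤ D := step1 X2 hX21 hX22 hX23 hX24
  by_cases hU : X1 ∪ X2 = er s
  · -- counting contradiction
    have hui : joins m s (X1 ∪ X2) + joins m s (X1 ∩ X2) = joins m s X1 + joins m s X2 :=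
      joins_union_inter m s X1 X2
    have h1 : joins m s (X1 ∪ X2) = D := by rw [hU]; exact hje
    have h2 : 1 ≤ joins m s (X1 ∩ X2) := by
      have : t ∈ X1 ∩ X2 := Finset.mem_inter.2 ⟨htX1, htX2⟩
      have := joins_single_le m s this
      omega
    omega
  · -- submodularity contradiction
    have hInt : (X1 ∩ X2).Nonempty := ⟨t, Finset.mem_inter.2 ⟨htX1, htX2⟩⟩
    have hIsub : X1 ∩ X2 ⊆ er s := fun x hx => hX12 (Finset.mem_inter.1 hx).1
    have hIne : X1 ∩ X2 ≠ er s := by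
      intro h
      apply hX13
      apply Finset.Subset.antisymm hX12
      rw [← h]
      exact Finset.inter_subset_left
    have hIlam : lam ≤ cutN m (X1 ∩ X2) := (hconn _ hInt hIsub hIne).1
    have hsub := cutN_submod m X1 X2
    -- tightness via parity
    obtain ⟨k1, hk1⟩ := cutN_even m hdeg X1
    obtain ⟨k2, hk2⟩ := cutN_even m hdeg X2
    have hl1 : lam ≤ cutN m X1 := (hconn _ hX11 hX12 hX13).1
    have hl2 : lam ≤ cutN m X2 := (hconn _ hX21 hX22 hX23).1
    have hUdang : cutN m (X1 ∪ X2) < lam + 2 := by omega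
    have hUne : (X1 ∪ X2).Nonempty := hX11.mono Finset.subset_union_left
    have hUsub : X1 ∪ X2 ⊆ er s := Finset.union_subset hX12 hX22
    have := hX1max (X1 ∪ X2) ⟨hUne, hUsub, hU, hUdang⟩ Finset.subset_union_left
    apply huX1
    rw [← this]
    exact Finset.mem_union_right _ huX2



variable {V : Type*} [Fintype V] [DecidableEq V]

/-- Global feasibility of a multigraph for the connectivity requirement `lam`. -/
def GoodM (lam : ℕ) (m : Sym2 V → ℕ) : Prop :=
  (∀ X : Finset V, X.Nonempty → X ≠ Finset.univ → lam ≤ cutN m X) ∧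
    (∀ v : V, Even (cutN m {v}))

lemma goodM_hconn {lam : ℕ} {m : Sym2 V → ℕ} (hg : GoodM lam m) (s : V)
    (X : Finset V) (h1 : X.Nonempty) (h2 : X ⊆ er s) (h3 : X ≠ er s) :
    lam ≤ cutN m X ∧ lam ≤ cutN m (insert s X) := by
  have hsX : s ∉ X := fun h => by
    have := h2 h; rw [er, Finset.mem_erase] at this; exact this.1 rfl
  constructor
  · apply hg.1 X h1
    intro h
    exact hsX (h ▸ Finset.mem_univ s)
  · apply hg.1 (insert s X) ⟨s, Finset.mem_insert_self s X⟩
    intro h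
    apply h3
    apply Finset.Subset.antisymm h2
    intro v hv
    rw [er, Finset.mem_erase] at hv
    have : v ∈ insert s X := h ▸ Finset.mem_univ v
    rcases Finset.mem_insert.1 this with rfl | hvX
    · exact absurd rfl hv.1
    · exact hvX

lemma card_pos_of_good {lam : ℕ} (hlam2 : 2 ≤ lam) {m : Sym2 V → ℕ} (hg : GoodM lam m)
    (hcard : 3 ≤ Fintype.card V) (v : V) : lam ≤ cutN m {v} := by
  apply hg.1 {v} ⟨v, Finset.mem_singleton_self v⟩
  intro h
  have := Finset.card_univ (α := V)
  rw [← h] at this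
  simp at this
  omega

/-- Main reduction: from any good multigraph we can reach one where each degree equals `lam`,
without increasing the `Dd`-cost, provided `Dd` satisfies the triangle-type inequalities. -/
lemma reduce_to_regular (lam : ℕ) (hlam : Even lam) (hlam2 : 2 ≤ lam)
    (hcard : 3 ≤ Fintype.card V)
    (Dd : Sym2 V → ℝ)
    (hDtri : ∀ s a b : V, Dd s(a, b) ≤ Dd s(s, a) + Dd s(s, b)) :
    ∀ n : ℕ, ∀ m : Sym2 V → ℕ, (∑ v : V, cutN m {v}) = n → GoodM lam m →
      ∃ m' : Sym2 V → ℕ, GoodM lam m' ∧ (∀ v : V, cutN m' {v} = lam) ∧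
        costD Dd m' ≤ costD Dd m := by
  intro n
  induction n using Nat.strong_induction_on with
  | _ n ih =>
    intro m hmeas hg
    by_cases hreg : ∀ v : V, cutN m {v} = lam
    · exact ⟨m, hg, hreg, le_refl _⟩
    · push_neg at hreg
      obtain ⟨s, hs⟩ := hreg
      have hslam : lam < cutN m {s} :=
        lt_of_le_of_ne (card_pos_of_good hlam2 hg hcard s) (Ne.symm hs)
      obtain ⟨a, b, has, hbs, hslot, hadm⟩ := exists_admissible m s lam hlam hlam2 hg.2
        (goodM_hconn hg s) hslam
      set m' := splitM m s a b with hm'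
      -- effect on a cut not containing s
      have heff : ∀ X : Finset V, s ∉ X →
          cutN m' X + 2 * (if a ∈ X ∧ b ∈ X then 1 else 0) = cutN m X :=
        fun X hX => cutN_splitM_not_mem has hbs hslot hX
      -- degree of s decreases by exactly 2
      have hdegs : cutN m' {s} + 2 = cutN m {s} := by
        have h := cutN_splitM has hbs hslot {s}
        have c1 : crossP (↑({s} : Finset V)) s(s, a) := by
          rw [crossP_mk]; simp [has]
        have c2 : crossP (↑({s} : Finset V)) s(s, b) := by
          rw [crossP_mk]; simp [hbs]
        have c3 : ¬ crossP (↑({s} : Finset V)) s(a, b) := by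
          rw [crossP_mk]; simp [has, hbs]
        rw [if_pos c1, if_pos c2, if_neg c3, ← hm'] at h
        omega
      clear_value m'
      obtain ⟨dsh, hdsh⟩ := hg.2 s
      obtain ⟨lamh, hlamh⟩ := hlam
      -- new graph is good
      have hg' : GoodM lam m' := by
        constructor
        · intro X hX1 hX2
          by_cases hsX : s ∈ X
          · rw [← cutN_compl]
            have hsXc : s ∉ Xᶜ := by simp [hsX]
            have hXc1 : (Xᶜ : Finset V).Nonempty := by
              rw [← Finset.card_pos, Finset.card_compl]
              have : X.card < Fintype.card V := by
                apply lt_of_le_of_ne (Finset.card_le_univ X)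
                intro h
                exact hX2 (Finset.eq_univ_of_card X h)
              omega
            by_cases hXer : Xᶜ = er s
            · rw [hXer, er_eq_compl, cutN_compl]
              omega
            · have hXsub : Xᶜ ⊆ er s := by
                intro v hv
                rw [er, Finset.mem_erase]
                exact ⟨fun h => hsXc (h ▸ hv), Finset.mem_univ v⟩
              have h := heff Xᶜ hsXc
              by_cases hab : a ∈ Xᶜ ∧ b ∈ Xᶜ
              · have := hadm Xᶜ hXc1 hXsub hXer hab.1 hab.2
                rw [if_pos hab] at h
                omega
              · rw [if_neg hab] at h
                have := (goodM_hconn hg s Xᶜ hXc1 hXsub hXer).1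
                omega
          · by_cases hXer : X = er s
            · rw [hXer, er_eq_compl, cutN_compl]
              omega
            · have hXsub : X ⊆ er s := by
                intro v hv
                rw [er, Finset.mem_erase]
                exact ⟨fun h => hsX (h ▸ hv), Finset.mem_univ v⟩
              have h := heff X hsX
              by_cases hab : a ∈ X ∧ b ∈ X
              · have := hadm X hX1 hXsub hXer hab.1 hab.2
                rw [if_pos hab] at h
                omega
              · rw [if_neg hab] at h
                have := (goodM_hconn hg s X hX1 hXsub hXer).1
                omega
        · intro v
          by_cases hv : v = s
          · subst hv
            obtain ⟨k, hk⟩ := hg.2 v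
            exact ⟨k - 1, by omega⟩
          · have h := heff {v} (by simp [Ne.symm hv])
            obtain ⟨k, hk⟩ := hg.2 v
            by_cases hab : a ∈ ({v} : Finset V) ∧ b ∈ ({v} : Finset V)
            · rw [if_pos hab] at h
              exact ⟨k - 1, by omega⟩
            · rw [if_neg hab] at h
              exact ⟨k, by omega⟩
      -- measure decreases
      have hmeas' : (∑ v : V, cutN m' {v}) < n := by
        rw [← hmeas]
        apply Finset.sum_lt_sum
        · intro v _
          by_cases hv : v = s
          · subst hv; omega
          · have h := heff {v} (by simp [Ne.symm hv])
            by_cases hab : a ∈ ({v} : Finset V) ∧ b ∈ ({v} : Finset V)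
            · rw [if_pos hab] at h; omega
            · rw [if_neg hab] at h; omega
        · exact ⟨s, Finset.mem_univ s, by omega⟩
      obtain ⟨m'', hg'', hreg'', hcost''⟩ := ih _ hmeas' m' rfl hg'
      refine ⟨m'', hg'', hreg'', le_trans hcost'' ?_⟩
      have h := costD_splitM has hbs hslot Dd
      rw [← hm'] at h
      have := hDtri s a b
      linarith



variable {V : Type*} [Fintype V] [DecidableEq V]

lemma walk_cross {G : SimpleGraph V} {S : Set V} :
    ∀ {u v : V} (p : G.Walk u v), u ∈ S → v ∉ S → ∃ f ∈ p.edges, crossP S f := by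
  intro u v p
  induction p with
  | nil => intro h1 h2; exact absurd h1 h2
  | @cons u w v h q ih =>
    intro h1 h2
    by_cases hw : w ∈ S
    · obtain ⟨f, hf, hc⟩ := ih hw h2
      exact ⟨f, by rw [SimpleGraph.Walk.edges_cons]; exact List.mem_cons_of_mem _ hf, hc⟩
    · exact ⟨s(u, w), by rw [SimpleGraph.Walk.edges_cons]; exact List.mem_cons_self,
        ⟨u, w, rfl, h1, hw⟩⟩

lemma walk_cross' {G : SimpleGraph V} {S : Set V} {u v : V} (p : G.Walk u v)
    (h : crossP S s(u, v)) : ∃ f ∈ p.edges, crossP S f := by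
  rw [crossP_mk] at h
  rcases h with ⟨h1, h2⟩ | ⟨h1, h2⟩
  · exact walk_cross p h1 h2
  · obtain ⟨f, hf, hc⟩ := walk_cross p.reverse h1 h2
    rw [SimpleGraph.Walk.edges_reverse, List.mem_reverse] at hf
    exact ⟨f, hf, hc⟩

lemma crossP_isdiag {S : Set V} {e : Sym2 V} (h : crossP S e) : ¬ e.IsDiag := by
  obtain ⟨u, v, rfl, hu, hv⟩ := h
  rw [Sym2.mk_isDiag_iff]
  rintro rfl
  exact hv hu

lemma sum_count_mul (G : SimpleGraph V) (g : Sym2 V → ℝ) (l : List (Sym2 V))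
    (hl : ∀ f ∈ l, f ∈ G.edgeSet) :
    (∑ f : Sym2 V, if f ∈ G.edgeSet then g f * (l.count f : ℝ) else 0) = (l.map g).sum := by
  induction l with
  | nil => simp
  | cons a l ih =>
    have ha : a ∈ G.edgeSet := hl a (List.mem_cons_self)
    have step : ∀ f : Sym2 V, (if f ∈ G.edgeSet then g f * (((a :: l).count f : ℕ) : ℝ) else 0)
        = (if f ∈ G.edgeSet then g f * ((l.count f : ℕ) : ℝ) else 0)
          + (if f = a then (if f ∈ G.edgeSet then g f else 0) else 0) := by
      intro f
      rw [List.count_cons]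
      by_cases hfa : f = a
      · subst hfa
        by_cases hf : f ∈ G.edgeSet
        · simp only [beq_self_eq_true, if_true, if_pos hf]
          push_cast
          ring
        · simp [hf]
      · simp [beq_iff_eq, hfa, Ne.symm hfa]
    rw [Finset.sum_congr rfl (fun f _ => step f), Finset.sum_add_distrib,
      ih (fun f hf => hl f (List.mem_cons_of_mem _ hf)),
      Finset.sum_ite_eq' Finset.univ a (fun f => if f ∈ G.edgeSet then g f else 0)]
    simp [ha]
    ring

section Dir2

variable {G : SimpleGraph V} {c : Sym2 V → ℝ}

lemma direction2 (hG : G.Connected) (hc : ∀ e ∈ G.edgeSet, 0 ≤ c e)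
    (x : Sym2 V → ℝ)
    (hx0 : ∀ e : Sym2 V, ¬ e.IsDiag → 0 ≤ x e)
    (hxcut : ∀ S : Set V, S.Nonempty → S ≠ Set.univ →
      2 ≤ ∑ e : Sym2 V, if crossP S e then x e else 0) :
    ∃ y : Sym2 V → ℝ,
      (∀ f ∈ G.edgeSet, 0 ≤ y f) ∧
      (∀ S : Set V, S.Nonempty → S ≠ Set.univ →
        2 ≤ ∑ f : Sym2 V, if f ∈ G.edgeSet ∧ crossP S f then y f else 0) ∧
      (∑ f : Sym2 V, if f ∈ G.edgeSet then c f * y f else 0)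
        = ∑ e : Sym2 V, if ¬ e.IsDiag then spDist G c e * x e else 0 := by
  classical
  have hch : ∀ e : Sym2 V, ∃ z : (u : V) × (v : V) × G.Walk u v,
      e = s(z.1, z.2.1) ∧ wcost c z.2.2 = spDist G c e := by
    intro e
    induction e using Sym2.ind with
    | _ u v =>
      obtain ⟨p, hp⟩ := exists_spWalk hG hc u v
      exact ⟨⟨u, v, p⟩, rfl, hp⟩
  choose Z hZ1 hZ2 using hch
  set y : Sym2 V → ℝ := fun f =>
    ∑ e : Sym2 V, if ¬ e.IsDiag then x e * ((Z e).2.2.edges.count f : ℝ) else 0 with hy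
  have hynn : ∀ f : Sym2 V, 0 ≤ y f := by
    intro f
    apply Finset.sum_nonneg
    intro e _
    by_cases he : ¬ e.IsDiag
    · rw [if_pos he]
      exact mul_nonneg (hx0 e he) (by positivity)
    · rw [if_neg he]
  refine ⟨y, fun f _ => hynn f, ?_, ?_⟩
  · -- cut constraints
    intro S hS1 hS2
    have hswap : (∑ f : Sym2 V, if f ∈ G.edgeSet ∧ crossP S f then y f else 0)
        = ∑ e : Sym2 V, if ¬ e.IsDiag then
            x e * (∑ f : Sym2 V, if f ∈ G.edgeSet ∧ crossP S f
              then ((Z e).2.2.edges.count f : ℝ) else 0) else 0 := by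
      have h1 : ∀ f : Sym2 V, (if f ∈ G.edgeSet ∧ crossP S f then y f else 0)
          = ∑ e : Sym2 V, if ¬ e.IsDiag then
              x e * (if f ∈ G.edgeSet ∧ crossP S f then ((Z e).2.2.edges.count f : ℝ) else 0)
            else 0 := by
        intro f
        by_cases hf : f ∈ G.edgeSet ∧ crossP S f
        · rw [if_pos hf, hy]
          apply Finset.sum_congr rfl
          intro e _
          by_cases he : ¬ e.IsDiag <;> simp [he, hf]
        · rw [if_neg hf]
          symm
          apply Finset.sum_eq_zero
          intro e _
          by_cases he : ¬ e.IsDiag <;> simp [he, hf]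
      rw [Finset.sum_congr rfl (fun f _ => h1 f), Finset.sum_comm]
      apply Finset.sum_congr rfl
      intro e _
      by_cases he : ¬ e.IsDiag
      · simp [he, Finset.mul_sum]
      · simp [he]
    rw [hswap]
    have hstep : ∀ e : Sym2 V, (if crossP S e then x e else 0)
        ≤ (if ¬ e.IsDiag then
            x e * (∑ f : Sym2 V, if f ∈ G.edgeSet ∧ crossP S f
              then ((Z e).2.2.edges.count f : ℝ) else 0) else 0) := by
      intro e
      by_cases he : ¬ e.IsDiag
      · have hinn : (0:ℝ) ≤ ∑ f : Sym2 V, if f ∈ G.edgeSet ∧ crossP S f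
            then ((Z e).2.2.edges.count f : ℝ) else 0 := by
          apply Finset.sum_nonneg
          intro f _
          by_cases hf : f ∈ G.edgeSet ∧ crossP S f <;> simp [hf]
        by_cases hcr : crossP S e
        · rw [if_pos hcr, if_pos he]
          have hx := hx0 e he
          have h1 : (1:ℝ) ≤ ∑ f : Sym2 V, if f ∈ G.edgeSet ∧ crossP S f
              then ((Z e).2.2.edges.count f : ℝ) else 0 := by
            obtain ⟨f0, hf0, hcf0⟩ := walk_cross' (Z e).2.2 (by rw [← hZ1 e]; exact hcr)
            have hf0GE : f0 ∈ G.edgeSet := (Z e).2.2.edges_subset_edgeSet hf0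
            have hcount : (1:ℝ) ≤ ((Z e).2.2.edges.count f0 : ℝ) := by
              exact_mod_cast List.count_pos_iff.2 hf0
            calc (1:ℝ) ≤ ((Z e).2.2.edges.count f0 : ℝ) := hcount
              _ = (if f0 ∈ G.edgeSet ∧ crossP S f0
                    then ((Z e).2.2.edges.count f0 : ℝ) else 0) := by rw [if_pos ⟨hf0GE, hcf0⟩]
              _ ≤ _ := by
                  apply Finset.single_le_sum
                    (f := fun f => if f ∈ G.edgeSet ∧ crossP S f
                      then ((Z e).2.2.edges.count f : ℝ) else 0)
                    (fun f _ => by by_cases hf : f ∈ G.edgeSet ∧ crossP S f <;> simp [hf])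
                    (Finset.mem_univ f0)
          calc x e = x e * 1 := (mul_one _).symm
            _ ≤ _ := mul_le_mul_of_nonneg_left h1 hx
        · rw [if_neg hcr, if_pos he]
          exact mul_nonneg (hx0 e he) hinn
      · rw [if_neg he]
        have hcr : ¬ crossP S e := fun h => he (crossP_isdiag h)
        rw [if_neg hcr]
    calc (2:ℝ) ≤ ∑ e : Sym2 V, if crossP S e then x e else 0 := hxcut S hS1 hS2
      _ ≤ _ := Finset.sum_le_sum (fun e _ => hstep e)
  · -- cost identity
    have h1 : ∀ f : Sym2 V, (if f ∈ G.edgeSet then c f * y f else 0)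
        = ∑ e : Sym2 V, if ¬ e.IsDiag then
            x e * (if f ∈ G.edgeSet then c f * ((Z e).2.2.edges.count f : ℝ) else 0) else 0 := by
      intro f
      by_cases hf : f ∈ G.edgeSet
      · rw [if_pos hf, hy]
        simp only
        rw [Finset.mul_sum]
        apply Finset.sum_congr rfl
        intro e _
        by_cases he : ¬ e.IsDiag <;> simp [he, hf] <;> ring
      · rw [if_neg hf]
        symm
        apply Finset.sum_eq_zero
        intro e _
        by_cases he : ¬ e.IsDiag <;> simp [he, hf]
    rw [Finset.sum_congr rfl (fun f _ => h1 f), Finset.sum_comm]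
    apply Finset.sum_congr rfl
    intro e _
    by_cases he : ¬ e.IsDiag
    · simp only [eq_true he, if_true]
      rw [← Finset.mul_sum, mul_comm (spDist G c e) (x e)]
      congr 1
      rw [← hZ2 e]
      exact sum_count_mul G c (Z e).2.2.edges
        (fun f hf => (Z e).2.2.edges_subset_edgeSet hf)
    · simp only [eq_false he, if_false]
      exact Finset.sum_eq_zero (fun f _ => by simp [he])

end Dir2


variable {V : Type*} [Fintype V] [DecidableEq V]

lemma rat_scale {q : ℚ} (hq : 0 ≤ q) {N : ℕ} (hd : q.den ∣ N) :
    ∃ k : ℕ, (k : ℝ) = (N : ℝ) * (q : ℝ) := by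
  obtain ⟨M, hM⟩ := hd
  refine ⟨q.num.toNat * M, ?_⟩
  have hden : (q.den : ℝ) ≠ 0 := by
    have h := q.den_pos
    positivity
  have hnum : ((q.num.toNat : ℕ) : ℝ) = ((q.num : ℤ) : ℝ) := by
    exact_mod_cast congrArg (fun z : ℤ => (z : ℝ)) (Int.toNat_of_nonneg (Rat.num_nonneg.2 hq))
  have hcast : (q : ℝ) = (q.num : ℝ) / (q.den : ℝ) := by rw [Rat.cast_def]
  subst hM
  push_cast
  rw [hnum, hcast, mul_comm ((q.den : ℝ)) ((M : ℝ)), mul_assoc, mul_div_cancel₀ _ hden]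
  ring

lemma cutN_cast (m : Sym2 V → ℕ) (X : Finset V) :
    ((cutN m X : ℕ) : ℝ) = ∑ e : Sym2 V, if crossP (↑X) e then (m e : ℝ) else 0 := by
  unfold cutN
  push_cast
  apply Finset.sum_congr rfl
  intro e _
  by_cases h : crossP (↑X) e <;> simp [h]

lemma cutN_two (k : Sym2 V → ℕ) (X : Finset V) :
    cutN (fun e => 2 * k e) X = 2 * cutN k X := by
  unfold cutN
  rw [Finset.mul_sum]
  apply Finset.sum_congr rfl
  intro e _
  by_cases h : crossP (↑X) e <;> simp [h]

lemma cut_pair (m : Sym2 V → ℕ) {u v : V} (huv : u ≠ v) :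
    cutN m {u, v} + 2 * m s(u, v) = cutN m {v} + cutN m {u} := by
  have h := cutN_insert m u {v} (by simp [huv])
  have hj : joins m u {v} = m s(u, v) := Finset.sum_singleton _ _
  rw [hj] at h
  exact h

lemma crossP_not_diag {S : Set V} {e : Sym2 V} (h : crossP S e) :
    e ∈ (⊤ : SimpleGraph V).edgeSet := by
  obtain ⟨u, v, rfl, hu, hv⟩ := h
  rw [SimpleGraph.mem_edgeSet, SimpleGraph.top_adj]
  rintro rfl
  exact hv hu

section Dir1

variable {G : SimpleGraph V} {c : Sym2 V → ℝ}

lemma direction1 (hG : G.Connected) (hn : 3 ≤ Fintype.card V)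
    (hc : ∀ e ∈ G.edgeSet, 0 ≤ c e)
    (y : Sym2 V → ℝ) (hy0 : ∀ e ∈ G.edgeSet, 0 ≤ y e)
    (hycut : ∀ S : Set V, S.Nonempty → S ≠ Set.univ →
      2 ≤ ∑ f : Sym2 V, if f ∈ G.edgeSet ∧ crossP S f then y f else 0)
    (ε : ℝ) (hε : 0 < ε) :
    ∃ x : Sym2 V → ℝ,
      (∀ e : Sym2 V, ¬ e.IsDiag → 0 ≤ x e ∧ x e ≤ 1) ∧
      (∀ v : V, (∑ e : Sym2 V,
        if crossP (↑({v} : Finset V)) e then x e else 0) = 2) ∧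
      (∀ S : Set V, S.Nonempty → S ≠ Set.univ →
        2 ≤ ∑ e : Sym2 V, if crossP S e then x e else 0) ∧
      (∑ e : Sym2 V, if ¬ e.IsDiag then spDist G c e * x e else 0)
        ≤ (∑ f : Sym2 V, if f ∈ G.edgeSet then c f * y f else 0) + ε := by
  classical
  set d := spDist G c with hd
  -- the total cost
  set T : ℝ := (∑ f : Sym2 V, if f ∈ G.edgeSet then c f else 0) + 1 with hT
  have hTsum : 0 ≤ ∑ f : Sym2 V, if f ∈ G.edgeSet then c f else 0 := by
    apply Finset.sum_nonneg
    intro f _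
    by_cases hf : f ∈ G.edgeSet <;> simp [hf]
    · exact hc f hf
  have hT0 : 0 < T := by rw [hT]; linarith
  set δ : ℝ := ε / T with hδdef
  have hδ : 0 < δ := div_pos hε hT0
  -- truncated y
  set y0 : Sym2 V → ℝ := fun e => if e ∈ G.edgeSet then y e else 0 with hy0def
  have hy0nn : ∀ e, 0 ≤ y0 e := by
    intro e
    rw [hy0def]
    by_cases he : e ∈ G.edgeSet <;> simp [he]
    · exact hy0 e he
  -- rational upper approximations
  have hrat : ∀ e : Sym2 V, ∃ q : ℚ, y0 e < (q : ℝ) ∧ (q : ℝ) < y0 e + δ :=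
    fun e => exists_rat_btwn (lt_add_of_pos_right _ hδ)
  choose q hq1 hq2 using hrat
  have hqnn : ∀ e, 0 ≤ q e := by
    intro e
    have := lt_of_le_of_lt (hy0nn e) (hq1 e)
    exact_mod_cast this.le
  set N : ℕ := ∏ e : Sym2 V, (q e).den with hN
  have hN0 : 0 < N := Finset.prod_pos (fun e _ => (q e).den_pos)
  set y' : Sym2 V → ℝ := fun e => if e ∈ G.edgeSet then (q e : ℝ) else 0 with hy'
  have hy'val : ∀ e, y' e = if e ∈ G.edgeSet then (q e : ℝ) else 0 := fun e => rfl
  have hy0val : ∀ e, y0 e = if e ∈ G.edgeSet then y e else 0 := fun e => rfl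
  have hy'nn : ∀ e, 0 ≤ y' e := by
    intro e
    rw [hy']
    by_cases he : e ∈ G.edgeSet <;> simp [he]
    · exact_mod_cast hqnn e
  have hy'ge : ∀ e ∈ G.edgeSet, y e ≤ y' e := by
    intro e he
    have h1 := hq1 e
    rw [hy0val e, if_pos he] at h1
    rw [hy'val e, if_pos he]
    exact h1.le
  have hy'le : ∀ e ∈ G.edgeSet, y' e ≤ y e + δ := by
    intro e he
    have h2 := hq2 e
    rw [hy0val e, if_pos he] at h2
    rw [hy'val e, if_pos he]
    exact h2.le
  -- integer scaling
  have hk : ∀ e : Sym2 V, ∃ k : ℕ, (k : ℝ) = (N : ℝ) * y' e := by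
    intro e
    rw [hy'val e]
    by_cases he : e ∈ G.edgeSet
    · rw [if_pos he]
      exact rat_scale (hqnn e) (Finset.dvd_prod_of_mem _ (Finset.mem_univ e))
    · exact ⟨0, by rw [if_neg he]; simp⟩
  choose k hkk using hk
  set m₀ : Sym2 V → ℕ := fun e => 2 * k e with hm₀
  set lam : ℕ := 4 * N with hlam
  have hm₀cast : ∀ e, ((m₀ e : ℕ) : ℝ) = 2 * N * y' e := by
    intro e
    rw [hm₀]
    push_cast
    rw [hkk e]
    ring
  -- m₀ is good
  have hgood : GoodM lam m₀ := by
    constructor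
    · intro X hX1 hX2
      have hcast : ((cutN m₀ X : ℕ) : ℝ)
          = 2 * N * ∑ e : Sym2 V, if crossP (↑X) e then y' e else 0 := by
        rw [cutN_cast]
        rw [Finset.mul_sum]
        apply Finset.sum_congr rfl
        intro e _
        by_cases h : crossP (↑X) e
        · rw [if_pos h, if_pos h, hm₀cast e]
        · rw [if_neg h, if_neg h, mul_zero]
      have heq : (∑ e : Sym2 V, if crossP (↑X) e then y' e else 0)
          = ∑ e : Sym2 V, if e ∈ G.edgeSet ∧ crossP (↑X : Set V) e then y' e else 0 := by
        apply Finset.sum_congr rfl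
        intro e _
        by_cases h : crossP (↑X : Set V) e
        · by_cases hge : e ∈ G.edgeSet
          · rw [if_pos h, if_pos ⟨hge, h⟩]
          · rw [if_pos h, if_neg (fun hh => hge hh.1)]
            rw [hy'val e, if_neg hge]
        · rw [if_neg h, if_neg (fun hh => h hh.2)]
      have hmono : (∑ e : Sym2 V, if e ∈ G.edgeSet ∧ crossP (↑X : Set V) e then y e else 0)
          ≤ ∑ e : Sym2 V, if e ∈ G.edgeSet ∧ crossP (↑X : Set V) e then y' e else 0 := by
        apply Finset.sum_le_sum
        intro e _
        by_cases h : e ∈ G.edgeSet ∧ crossP (↑X : Set V) e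
        · rw [if_pos h, if_pos h]; exact hy'ge e h.1
        · rw [if_neg h, if_neg h]
      have hXset : (↑X : Set V).Nonempty := by
        obtain ⟨v, hv⟩ := hX1
        exact ⟨v, hv⟩
      have hXuniv : (↑X : Set V) ≠ Set.univ := by
        intro h
        apply hX2
        apply Finset.coe_injective
        rw [h, Finset.coe_univ]
      have h2 := hycut (↑X) hXset hXuniv
      have : (lam : ℝ) ≤ ((cutN m₀ X : ℕ) : ℝ) := by
        rw [hcast, heq, hlam]
        push_cast
        nlinarith [hmono, h2, (by exact_mod_cast hN0 : (0:ℝ) < (N:ℝ))]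
      exact_mod_cast this
    · intro v
      rw [hm₀, cutN_two]
      exact ⟨cutN k {v}, by ring⟩
  -- run the splitting reduction
  have htri : ∀ s a b : V, d s(a, b) ≤ d s(s, a) + d s(s, b) := by
    intro s a b
    have h := spDist_triangle hG hc a s b
    rw [hd]
    rw [show s(s, a) = s(a, s) from Sym2.eq_swap]
    exact h
  obtain ⟨m', hg', hreg', hcost'⟩ := reduce_to_regular lam ⟨2 * N, by rw [hlam]; ring⟩
    (by omega) hn d htri (∑ v : V, cutN m₀ {v}) m₀ rfl hgood
  -- final vector
  set x : Sym2 V → ℝ := fun e => (m' e : ℝ) / (2 * N) with hx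
  have h2N : (0:ℝ) < 2 * N := by positivity
  have hxnn : ∀ e, 0 ≤ x e := by
    intro e
    rw [hx]
    positivity
  refine ⟨x, ?_, ?_, ?_, ?_⟩
  · -- bounds
    intro e he
    refine ⟨hxnn e, ?_⟩
    induction e using Sym2.ind with
    | _ u v =>
      have huv : u ≠ v := by
        rw [Sym2.mk_isDiag_iff] at he
        exact he
      have hpair := cut_pair m' huv
      have hcc : lam ≤ cutN m' {u, v} := by
        apply hg'.1
        · exact ⟨u, by simp⟩
        · intro h
          have : ({u, v} : Finset V).card = 2 := Finset.card_pair huv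
          rw [h, Finset.card_univ] at this
          omega
      have hdu := hreg' u
      have hdv := hreg' v
      have hm : m' s(u, v) ≤ 2 * N := by
        rw [hdu, hdv] at hpair
        omega
      rw [hx]
      rw [div_le_one h2N]
      exact_mod_cast hm
  · -- degrees
    intro v
    have : (∑ e : Sym2 V, if crossP (↑({v} : Finset V)) e then x e else 0)
        = ((cutN m' {v} : ℕ) : ℝ) / (2 * N) := by
      rw [cutN_cast, Finset.sum_div]
      apply Finset.sum_congr rfl
      intro e _
      by_cases h : crossP (↑({v} : Finset V)) e
      · rw [if_pos h, if_pos h, hx]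
      · rw [if_neg h, if_neg h, zero_div]
    rw [this, hreg' v, hlam]
    push_cast
    field_simp
    ring
  · -- cuts
    intro S hS1 hS2
    have hbridge : (∑ e : Sym2 V, if crossP S e then x e else 0)
        = ∑ e : Sym2 V, if crossP (↑(S.toFinset) : Set V) e then x e else 0 := by
      apply Finset.sum_congr rfl
      intro e _
      congr 1
      rw [Set.coe_toFinset]
    rw [hbridge]
    have heq : (∑ e : Sym2 V, if crossP (↑(S.toFinset) : Set V) e then x e else 0)
        = ((cutN m' S.toFinset : ℕ) : ℝ) / (2 * N) := by
      rw [cutN_cast, Finset.sum_div]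
      apply Finset.sum_congr rfl
      intro e _
      by_cases h : crossP (↑(S.toFinset) : Set V) e
      · rw [if_pos h, if_pos h, hx]
      · rw [if_neg h, if_neg h, zero_div]
    rw [heq]
    have hcc : lam ≤ cutN m' S.toFinset := by
      apply hg'.1
      · rw [Set.toFinset_nonempty]
        exact hS1
      · intro h
        apply hS2
        rw [← Set.coe_toFinset S, h, Finset.coe_univ]
    rw [le_div_iff₀ h2N]
    have : ((lam : ℕ) : ℝ) ≤ ((cutN m' S.toFinset : ℕ) : ℝ) := by exact_mod_cast hcc
    rw [hlam] at this
    push_cast at this ⊢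
    linarith
  · -- cost
    have hstep1 : (∑ e : Sym2 V, if ¬ e.IsDiag then d e * x e else 0)
        = costD d m' / (2 * N) := by
      unfold costD
      rw [Finset.sum_div]
      apply Finset.sum_congr rfl
      intro e _
      by_cases he : ¬ e.IsDiag
      · rw [if_pos he, hx]
        ring
      · rw [if_neg he]
        have hdiag : e.IsDiag := not_not.1 he
        rw [hd, spDist_isDiag_eq_zero hc hdiag]
        simp
    have hstep2 : costD d m₀ / (2 * N) = ∑ e : Sym2 V, y' e * d e := by
      unfold costD
      rw [Finset.sum_div]
      apply Finset.sum_congr rfl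
      intro e _
      rw [hm₀cast e]
      field_simp
    have hstep3 : (∑ e : Sym2 V, y' e * d e)
        = ∑ e : Sym2 V, if e ∈ G.edgeSet then d e * y' e else 0 := by
      apply Finset.sum_congr rfl
      intro e _
      by_cases he : e ∈ G.edgeSet
      · rw [if_pos he]; ring
      · rw [if_neg he, hy'val e, if_neg he, zero_mul]
    have hstep4 : (∑ e : Sym2 V, if e ∈ G.edgeSet then d e * y' e else 0)
        ≤ ∑ e : Sym2 V, if e ∈ G.edgeSet then c e * y' e else 0 := by
      apply Finset.sum_le_sum
      intro e _
      by_cases he : e ∈ G.edgeSet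
      · rw [if_pos he, if_pos he]
        apply mul_le_mul_of_nonneg_right _ (hy'nn e)
        rw [hd]
        induction e using Sym2.ind with
        | _ a b => exact spDist_le_c hc ((SimpleGraph.mem_edgeSet G).1 he)
      · rw [if_neg he, if_neg he]
    have hstep5 : (∑ e : Sym2 V, if e ∈ G.edgeSet then c e * y' e else 0)
        ≤ (∑ f : Sym2 V, if f ∈ G.edgeSet then c f * y f else 0) + ε := by
      have hsplit : ∀ e : Sym2 V, (if e ∈ G.edgeSet then c e * y' e else 0)
          ≤ (if e ∈ G.edgeSet then c e * y e else 0) + (if e ∈ G.edgeSet then c e else 0) * δ := by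
        intro e
        by_cases he : e ∈ G.edgeSet
        · rw [if_pos he, if_pos he, if_pos he]
          have h1 := hy'le e he
          have h2 := hc e he
          nlinarith
        · rw [if_neg he, if_neg he, if_neg he]
          simp
      calc (∑ e : Sym2 V, if e ∈ G.edgeSet then c e * y' e else 0)
          ≤ ∑ e : Sym2 V, ((if e ∈ G.edgeSet then c e * y e else 0)
            + (if e ∈ G.edgeSet then c e else 0) * δ) :=
            Finset.sum_le_sum (fun e _ => hsplit e)
        _ = (∑ f : Sym2 V, if f ∈ G.edgeSet then c f * y f else 0)
            + (∑ f : Sym2 V, if f ∈ G.edgeSet then c f else 0) * δ := by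
            rw [Finset.sum_add_distrib, ← Finset.sum_mul]
        _ ≤ _ := by
            have h1 : (∑ f : Sym2 V, if f ∈ G.edgeSet then c f else 0) * δ ≤ T * δ := by
              apply mul_le_mul_of_nonneg_right _ hδ.le
              rw [hT]; linarith
            have h2 : T * δ = ε := by
              rw [hδdef]
              field_simp
            linarith
    have hdivle : costD d m' / (2 * N) ≤ costD d m₀ / (2 * N) := by
      have := mul_le_mul_of_nonneg_right hcost' (le_of_lt (inv_pos.2 h2N))
      simpa [div_eq_mul_inv] using this
    rw [hstep1]
    calc costD d m' / (2 * N) ≤ costD d m₀ / (2 * N) := hdivle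
      _ = ∑ e : Sym2 V, y' e * d e := hstep2
      _ = _ := hstep3
      _ ≤ _ := le_trans hstep4 hstep5

end Dir1


variable {V : Type*} [Fintype V] [DecidableEq V]

lemma mem_top_iff (e : Sym2 V) : e ∈ (⊤ : SimpleGraph V).edgeSet ↔ ¬ e.IsDiag := by
  induction e using Sym2.ind with
  | _ u v =>
    rw [SimpleGraph.mem_edgeSet, SimpleGraph.top_adj, Sym2.mk_isDiag_iff]

lemma cutSum_top_eq (x : Sym2 V → ℝ) (S : Set V) :
    cutSum (⊤ : SimpleGraph V) x S = ∑ e : Sym2 V, if crossP S e then x e else 0 := by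
  unfold cutSum
  apply Finset.sum_congr rfl
  intro e _
  by_cases h : crossP S e
  · rw [if_pos h, if_pos (show e ∈ (⊤ : SimpleGraph V).edgeSet ∧
      ∃ u v, e = s(u, v) ∧ u ∈ S ∧ v ∉ S from ⟨(mem_top_iff e).2 (crossP_isdiag h), h⟩)]
  · rw [if_neg h, if_neg (show ¬(e ∈ (⊤ : SimpleGraph V).edgeSet ∧
      ∃ u v, e = s(u, v) ∧ u ∈ S ∧ v ∉ S) from fun hh => h hh.2)]

lemma vertexSum_top_eq (x : Sym2 V → ℝ) (v : V) :
    vertexSum (⊤ : SimpleGraph V) x v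
      = ∑ e : Sym2 V, if crossP (↑({v} : Finset V)) e then x e else 0 := by
  unfold vertexSum
  apply Finset.sum_congr rfl
  intro e _
  congr 1
  induction e using Sym2.ind with
  | _ a b =>
    simp only [SimpleGraph.mem_edgeSet, SimpleGraph.top_adj, Sym2.mem_iff, crossP_mk,
      Finset.coe_singleton, Set.mem_singleton_iff, eq_iff_iff]
    constructor
    · rintro ⟨hab, (rfl | rfl)⟩
      · exact Or.inl ⟨rfl, fun h => hab h.symm⟩
      · exact Or.inr ⟨rfl, fun h => hab h⟩
    · rintro (⟨rfl, h2⟩ | ⟨rfl, h2⟩)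
      · exact ⟨fun h => h2 h.symm, Or.inl rfl⟩
      · exact ⟨fun h => h2 h, Or.inr rfl⟩

lemma lpCost_top_eq (c x : Sym2 V → ℝ) :
    lpCost (⊤ : SimpleGraph V) c x = ∑ e : Sym2 V, if ¬ e.IsDiag then c e * x e else 0 := by
  unfold lpCost
  apply Finset.sum_congr rfl
  intro e _
  congr 1
  rw [mem_top_iff]

lemma cutSum_eq (G : SimpleGraph V) (x : Sym2 V → ℝ) (S : Set V) :
    cutSum G x S = ∑ e : Sym2 V, if e ∈ G.edgeSet ∧ crossP S e then x e else 0 := by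
  unfold cutSum
  apply Finset.sum_congr rfl
  intro e _
  by_cases h : e ∈ G.edgeSet ∧ crossP S e
  · rw [if_pos h, if_pos (show e ∈ G.edgeSet ∧ ∃ u v, e = s(u, v) ∧ u ∈ S ∧ v ∉ S from ⟨h.1, h.2⟩)]
  · rw [if_neg h, if_neg (show ¬(e ∈ G.edgeSet ∧ ∃ u v, e = s(u, v) ∧ u ∈ S ∧ v ∉ S) from
      fun hh => h ⟨hh.1, hh.2⟩)]

lemma vertexSum_eq (G : SimpleGraph V) (x : Sym2 V → ℝ) (v : V) :
    vertexSum G x v = ∑ e : Sym2 V, if e ∈ G.edgeSet ∧ v ∈ e then x e else 0 := by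
  unfold vertexSum
  apply Finset.sum_congr rfl
  intro e _
  by_cases h : e ∈ G.edgeSet ∧ v ∈ e
  · simp only [if_pos h]
  · simp only [if_neg h]

lemma lpCost_eq (G : SimpleGraph V) (c x : Sym2 V → ℝ) :
    lpCost G c x = ∑ e : Sym2 V, if e ∈ G.edgeSet then c e * x e else 0 := by
  unfold lpCost
  apply Finset.sum_congr rfl
  intro e _
  by_cases h : e ∈ G.edgeSet
  · simp only [if_pos h]
  · simp only [if_neg h]

lemma ytwo_feas {G : SimpleGraph V} (hG : G.Connected) : Feas2ECSS G (fun _ => (2:ℝ)) := by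
  constructor
  · intro e _; norm_num
  · intro S hS1 hS2
    rw [cutSum_eq]
    obtain ⟨u, hu⟩ := hS1
    obtain ⟨v, hv⟩ : ∃ v, v ∉ S := by
      by_contra h
      push_neg at h
      exact hS2 (Set.eq_univ_of_forall h)
    obtain ⟨f, hf, hcf⟩ := walk_cross ((hG u v).some) hu hv
    have hfE : f ∈ G.edgeSet := SimpleGraph.Walk.edges_subset_edgeSet _ hf
    calc (2:ℝ) = if f ∈ G.edgeSet ∧ crossP S f then (2:ℝ) else 0 := by rw [if_pos ⟨hfE, hcf⟩]
      _ ≤ _ := Finset.single_le_sum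
          (f := fun e => if e ∈ G.edgeSet ∧ crossP S e then (2:ℝ) else 0)
          (fun e _ => by by_cases h : e ∈ G.edgeSet ∧ crossP S e <;> simp [h])
          (Finset.mem_univ f)


end Aux

/-- The optimum of the subtour elimination LP on the metric completion of `G`
(the complete graph with shortest-path costs) equals the optimum of the
2ECSS LP on `G` itself. -/


theorem subtour_completion_eq_2ecss {V : Type} [Fintype V] [DecidableEq V]
    (G : SimpleGraph V) (hG : G.Connected) (hn : 3 ≤ Fintype.card V)
    (c : Sym2 V → ℝ) (hc : ∀ e ∈ G.edgeSet, 0 ≤ c e) :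
    sInf {t | ∃ x : Sym2 V → ℝ, FeasSubtour (⊤ : SimpleGraph V) x ∧
        t = lpCost (⊤ : SimpleGraph V) (spDist G c) x} =
      sInf {t | ∃ y : Sym2 V → ℝ, Feas2ECSS G y ∧ t = lpCost G c y} := by
  classical
  set A := {t | ∃ x : Sym2 V → ℝ, FeasSubtour (⊤ : SimpleGraph V) x ∧
    t = lpCost (⊤ : SimpleGraph V) (spDist G c) x} with hA
  set B := {t | ∃ y : Sym2 V → ℝ, Feas2ECSS G y ∧ t = lpCost G c y} with hB
  have hBne : B.Nonempty := ⟨lpCost G c (fun _ => 2), ⟨_, Aux.ytwo_feas hG, rfl⟩⟩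
  have hAbdd : BddBelow A := by
    refine ⟨0, ?_⟩
    rintro t ⟨x, hx, rfl⟩
    rw [Aux.lpCost_eq]
    apply Finset.sum_nonneg
    intro e _
    by_cases he : e ∈ (⊤ : SimpleGraph V).edgeSet
    · rw [if_pos he]
      exact mul_nonneg (Aux.spDist_nonneg hc e) ((hx.1 e he).1)
    · rw [if_neg he]
  have hBbdd : BddBelow B := by
    refine ⟨0, ?_⟩
    rintro t ⟨y, hy, rfl⟩
    rw [Aux.lpCost_eq]
    apply Finset.sum_nonneg
    intro e _
    by_cases he : e ∈ G.edgeSet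
    · rw [if_pos he]
      exact mul_nonneg (hc e he) (hy.1 e he)
    · rw [if_neg he]
  -- the subtour solutions produced by `direction1` are feasible
  have hdir1 : ∀ y : Sym2 V → ℝ, Feas2ECSS G y → ∀ ε : ℝ, 0 < ε →
      ∃ x : Sym2 V → ℝ, FeasSubtour (⊤ : SimpleGraph V) x ∧
        lpCost (⊤ : SimpleGraph V) (spDist G c) x ≤ lpCost G c y + ε := by
    intro y hy ε hε
    obtain ⟨x, hxb, hxdeg, hxcut, hxcost⟩ := Aux.direction1 hG hn hc y hy.1
      (fun S h1 h2 => by rw [← Aux.cutSum_eq]; exact hy.2 S h1 h2) ε hε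
    refine ⟨x, ⟨fun e he => hxb e ((Aux.mem_top_iff e).1 he),
      fun v => by rw [Aux.vertexSum_top_eq]; exact hxdeg v,
      fun S h1 h2 => by rw [Aux.cutSum_top_eq]; exact hxcut S h1 h2⟩, ?_⟩
    rw [Aux.lpCost_top_eq, Aux.lpCost_eq]
    exact hxcost
  have hAne : A.Nonempty := by
    obtain ⟨x, hfx, -⟩ := hdir1 (fun _ => 2) (Aux.ytwo_feas hG) 1 one_pos
    exact ⟨lpCost (⊤ : SimpleGraph V) (spDist G c) x, x, hfx, rfl⟩
  apply le_antisymm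
  · apply le_csInf hBne
    rintro b ⟨y, hy, rfl⟩
    refine le_of_forall_pos_le_add ?_
    intro ε hε
    obtain ⟨x, hfx, hcost⟩ := hdir1 y hy ε hε
    calc sInf A ≤ lpCost (⊤ : SimpleGraph V) (spDist G c) x := csInf_le hAbdd ⟨x, hfx, rfl⟩
      _ ≤ lpCost G c y + ε := hcost
  · apply le_csInf hAne
    rintro a ⟨x, hx, rfl⟩
    obtain ⟨y, hy0, hycut, hycost⟩ := Aux.direction2 hG hc x
      (fun e he => (hx.1 e ((Aux.mem_top_iff e).2 he)).1)
      (fun S h1 h2 => by rw [← Aux.cutSum_top_eq]; exact hx.2.2 S h1 h2)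
    have hyfeas : Feas2ECSS G y :=
      ⟨hy0, fun S h1 h2 => by rw [Aux.cutSum_eq]; exact hycut S h1 h2⟩
    have heq : lpCost G c y = lpCost (⊤ : SimpleGraph V) (spDist G c) x := by
      rw [Aux.lpCost_eq, Aux.lpCost_top_eq]
      exact hycost
    calc sInf B ≤ lpCost G c y := csInf_le hBbdd ⟨y, hyfeas, rfl⟩
      _ = _ := heq
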